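/- arXiv:cs/0608120 — 2 statements merged into one kernel-verified Lean document; each statement's English description precedes it below -/
import Mathlib

section
/- Let k ≥ 1 be a natural number and let x, y be ordinals such that x < y and such that z + ω^(k-1) < y for every ordinal z with x ≤ z < y. Then x + ω^k ≤ y. -/
open Ordinal

theorem add_omega0_pow_le (k : ℕ) (hk : 1 ≤ k) (x y : Ordinal) (hxy : x < y)
    (h : ∀ z, x ≤ z → z < y → z + Ordinal.omega0 ^ ((k - 1 : ℕ) : Ordinal) < y) :
    x + Ordinal.omega0 ^ (k : Ordinal) ≤ y := by
  set p := Ordinal.omega0 ^ ((k - 1 : ℕ) : Ordinal) with hp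
  have key : ∀ n : ℕ, x + p * n < y := by
    intro n
    induction n with
    | zero => simpa using hxy
    | succ n ih =>
      have h2 := h (x + p * n) le_self_add ih
      calc x + p * ((n : ℕ) + 1 : ℕ) = (x + p * n) + p := by
            push_cast
            rw [mul_add, mul_one, add_assoc]
        _ < y := h2
  have hk' : (k : Ordinal) = ((k - 1 : ℕ) : Ordinal) + 1 := by
    have hkk : k = (k - 1) + 1 := (Nat.succ_pred_eq_of_pos hk).symm
    rw [hkk]; push_cast; ring_nf
  rw [hk', Ordinal.opow_add, Ordinal.opow_one]
  rw [Ordinal.add_le_iff_of_isSuccLimit (Ordinal.isSuccLimit_mul_right (Ordinal.opow_pos _ Ordinal.omega0_pos) Ordinal.isSuccLimit_omega0)]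
  intro c hc
  rcases (Ordinal.lt_mul_iff_of_isSuccLimit Ordinal.isSuccLimit_omega0).1 hc with ⟨n', hn', hcn⟩
  obtain ⟨n, rfl⟩ := Ordinal.lt_omega0.1 hn'
  exact le_of_lt (lt_of_le_of_lt (add_le_add_right hcn.le x) (key n))
end

section
/- Let k ≥ 2 and 1 ≤ k' ≤ k−2 be natural numbers, let p and q be atomic propositions, and let σ be a model of LTL(ω^k) viewed inside LTL(ω^ω). Then σ, 0 ⊨ (□^{ω^(k'+1)} ◇^{ω^(k'+1)} X^{ω^(k')} p) ⇒ (X^{ω^(k'+1)} q) if and only if the following implication holds: if the set of natural numbers n ≥ 1 such that the index of p belongs to σ(ω^(k')·n) is infinite, then the index of q belongs to σ(ω^(k'+1)). -/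
open Ordinal

/-- Formulas of LTL(ω^ω): atoms `pₙ`, negation, conjunction, `X^β` for `β < ω^ω`,
and `U^β'` for `β' ≤ ω^ω`. -/
inductive LTLFormula : Type 1 where
  | atom : ℕ → LTLFormula
  | neg : LTLFormula → LTLFormula
  | and : LTLFormula → LTLFormula → LTLFormula
  | next : (β : Ordinal) → β < Ordinal.omega0 ^ Ordinal.omega0 → LTLFormula → LTLFormula
  | until : (β : Ordinal) → β ≤ Ordinal.omega0 ^ Ordinal.omega0 →
      LTLFormula → LTLFormula → LTLFormula

/-- Satisfaction `σ, β ⊨ φ` for LTL(ω^ω). -/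
def LTLSat (σ : Ordinal → Set ℕ) : LTLFormula → Ordinal → Prop
  | .atom n, β => n ∈ σ β
  | .neg φ, β => ¬ LTLSat σ φ β
  | .and φ ψ, β => LTLSat σ φ β ∧ LTLSat σ ψ β
  | .next β' _ φ, β => LTLSat σ φ (β + β')
  | .until β' _ φ ψ, β =>
      ∃ γ < β', LTLSat σ ψ (β + γ) ∧ ∀ γ' < γ, LTLSat σ φ (β + γ')

/-- A tautology `⊤`. -/
def LTLFormula.top : LTLFormula := .neg ((LTLFormula.atom 0).and (.neg (.atom 0)))

/-- `◇^β φ := ⊤ U^β φ`. -/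
def LTLFormula.diamond (β : Ordinal) (h : β ≤ Ordinal.omega0 ^ Ordinal.omega0)
    (φ : LTLFormula) : LTLFormula := .until β h .top φ

/-- `□^β φ := ¬ ◇^β ¬ φ`. -/
def LTLFormula.box (β : Ordinal) (h : β ≤ Ordinal.omega0 ^ Ordinal.omega0)
    (φ : LTLFormula) : LTLFormula := .neg (.diamond β h (.neg φ))

/-- `φ ⇒ ψ := ¬(φ ∧ ¬ψ)`. -/
def LTLFormula.implies (φ ψ : LTLFormula) : LTLFormula := .neg (φ.and ψ.neg)

lemma omega0_pow_nat_lt (i : ℕ) :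
    Ordinal.omega0 ^ (i : Ordinal) < Ordinal.omega0 ^ Ordinal.omega0 :=
  (opow_lt_opow_iff_right Ordinal.one_lt_omega0).2 (Ordinal.nat_lt_omega0 i)

lemma sat_implies (σ : Ordinal → Set ℕ) (φ ψ : LTLFormula) (β : Ordinal) :
    LTLSat σ (φ.implies ψ) β ↔ (LTLSat σ φ β → LTLSat σ ψ β) := by
  simp only [LTLFormula.implies, LTLSat]
  tauto

/-- `σ, 0 ⊨ (□^{ω^(k'+1)} ◇^{ω^(k'+1)} X^{ω^(k')} p) ⇒ (X^{ω^(k'+1)} q)` iff: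
if `p` holds at `ω^(k') · n` for infinitely many `n ≥ 1` then `q` holds at `ω^(k'+1)`. -/
theorem box_diamond_implies_iff (k k' : ℕ) (hk : 2 ≤ k) (hk'₁ : 1 ≤ k') (hk'₂ : k' ≤ k - 2)
    (p q : ℕ) (σ : Ordinal → Set ℕ) :
    LTLSat σ
      ((LTLFormula.box (Ordinal.omega0 ^ ((k' + 1 : ℕ) : Ordinal))
          (le_of_lt (omega0_pow_nat_lt (k' + 1)))
          (LTLFormula.diamond (Ordinal.omega0 ^ ((k' + 1 : ℕ) : Ordinal))
            (le_of_lt (omega0_pow_nat_lt (k' + 1)))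
            (LTLFormula.next (Ordinal.omega0 ^ (k' : Ordinal)) (omega0_pow_nat_lt k')
              (.atom p)))).implies
        (LTLFormula.next (Ordinal.omega0 ^ ((k' + 1 : ℕ) : Ordinal))
          (omega0_pow_nat_lt (k' + 1)) (.atom q))) 0 ↔
      ({n : ℕ | 1 ≤ n ∧ p ∈ σ (Ordinal.omega0 ^ (k' : Ordinal) * (n : Ordinal))}.Infinite →
        q ∈ σ (Ordinal.omega0 ^ ((k' + 1 : ℕ) : Ordinal))) := by
  have hw0 : (0:Ordinal.{0}) < Ordinal.omega0 ^ (k' : Ordinal) := opow_pos _ omega0_pos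
  set w : Ordinal.{0} := Ordinal.omega0 ^ (k' : Ordinal) with hwdef
  set W : Ordinal.{0} := Ordinal.omega0 ^ ((k' + 1 : ℕ) : Ordinal) with hWdef
  have hW : W = w * Ordinal.omega0 := by
    rw [hWdef, hwdef]
    push_cast
    rw [opow_add, opow_one]
  have habs : ∀ ρ < w, ρ + w = w := fun ρ hρ => Ordinal.add_absorp hρ le_rfl
  have key2 : ∀ (N : ℕ) (δ : Ordinal.{0}), δ < W →
      ∃ n : ℕ, N < n ∧ w * N + δ + w = w * n := by
    intro N δ hδ
    rw [hW] at hδ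
    obtain ⟨m, hm⟩ := Ordinal.lt_omega0.1 ((Ordinal.div_lt hw0.ne').2 hδ)
    refine ⟨N + m + 1, by omega, ?_⟩
    have hmod : w * (δ / w) + δ % w = δ := Ordinal.div_add_mod δ w
    rw [hm] at hmod
    calc w * N + δ + w = w * N + (w * m + δ % w) + w := by rw [hmod]
      _ = w * N + (w * m + (δ % w + w)) := by rw [add_assoc, add_assoc]
      _ = w * N + (w * m + w) := by rw [habs _ (Ordinal.mod_lt δ hw0.ne')]
      _ = w * (N + m + 1) := by rw [mul_add, mul_add, mul_one, add_assoc]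
      _ = w * ((N + m + 1 : ℕ) : Ordinal) := by push_cast; rfl
  have hbox : (∀ γ < W, ∃ δ < W, p ∈ σ (γ + δ + w)) ↔
      ({n : ℕ | 1 ≤ n ∧ p ∈ σ (w * (n : Ordinal))}.Infinite) := by
    constructor
    · intro h
      refine Set.infinite_of_not_bddAbove ?_
      rintro ⟨b, hb⟩
      have hwb : w * (b : Ordinal) < W := by
        rw [hW]; exact mul_lt_mul_of_pos_left (nat_lt_omega0 b) hw0
      obtain ⟨δ, hδ, hpδ⟩ := h (w * b) hwb
      obtain ⟨n, hbn, heq⟩ := key2 b δ hδ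
      rw [heq] at hpδ
      exact absurd (hb ⟨by omega, hpδ⟩) (by omega)
    · intro hinf γ hγ
      rw [hW] at hγ
      obtain ⟨c, hc, hγc⟩ := (Ordinal.lt_mul_iff_of_isSuccLimit Ordinal.isSuccLimit_omega0).1 hγ
      obtain ⟨m, hm⟩ := Ordinal.lt_omega0.1 hc
      rw [hm] at hγc
      obtain ⟨n, ⟨hn1, hpn⟩, hmn⟩ := hinf.exists_gt m
      have hγle : γ ≤ w * ((n - 1 : ℕ) : Ordinal) := by
        refine hγc.le.trans (mul_le_mul_right ?_ w)
        exact_mod_cast Nat.le_sub_one_of_lt hmn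
      refine ⟨w * ((n - 1 : ℕ) : Ordinal) - γ, ?_, ?_⟩
      · calc w * ((n - 1 : ℕ) : Ordinal) - γ ≤ w * ((n - 1 : ℕ) : Ordinal) :=
              Ordinal.sub_le_self _ _
          _ < W := by rw [hW]; exact mul_lt_mul_of_pos_left (nat_lt_omega0 _) hw0
      · rw [Ordinal.add_sub_cancel_of_le hγle, ← mul_add_one]
        have hcast : ((n - 1 : ℕ) : Ordinal.{0}) + 1 = (n : Ordinal.{0}) := by
          have h1 : ((n - 1 : ℕ) + 1 : ℕ) = n := by omega
          exact_mod_cast congrArg (Nat.cast : ℕ → Ordinal.{0}) h1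
        rw [hcast]
        exact hpn
  have hA : LTLSat σ
      (LTLFormula.box (Ordinal.omega0 ^ ((k' + 1 : ℕ) : Ordinal))
        (le_of_lt (omega0_pow_nat_lt (k' + 1)))
        (LTLFormula.diamond (Ordinal.omega0 ^ ((k' + 1 : ℕ) : Ordinal))
          (le_of_lt (omega0_pow_nat_lt (k' + 1)))
          (LTLFormula.next (Ordinal.omega0 ^ (k' : Ordinal)) (omega0_pow_nat_lt k')
            (.atom p)))) 0 ↔ (∀ γ < W, ∃ δ < W, p ∈ σ (γ + δ + w)) := by
    simp only [LTLFormula.box, LTLFormula.diamond, LTLFormula.top, LTLSat, zero_add,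
      ← hwdef, ← hWdef, and_not_self_iff, not_false_iff, imp_true_iff, and_true, true_and]
    push_neg
    rfl
  have hB : LTLSat σ
      (LTLFormula.next (Ordinal.omega0 ^ ((k' + 1 : ℕ) : Ordinal))
        (omega0_pow_nat_lt (k' + 1)) (.atom q)) 0 ↔ q ∈ σ W := by
    simp only [LTLSat, zero_add, ← hWdef]
  rw [sat_implies, hA, hB, hbox]
end
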